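/- The function G_k is strictly increasing on the interval [0,1], satisfies G_k(0) < 0 and G_k(1) > 0, and has a unique zero β* in (0,1); moreover { β ∈ [0,1] : G_k(β) < 0 } = [0, β*), so β* = sup { β ∈ [0,1] : G_k(β) < 0 }. -/

import Mathlib

/-- The binary entropy function `H(t) = -t·log₂ t - (1-t)·log₂(1-t)`. -/
noncomputable def binEntropy (t : ℝ) : ℝ :=
  -(t * Real.logb 2 t) - (1 - t) * Real.logb 2 (1 - t)

/-- The exponent function `g_k(β,δ)`. -/
noncomputable def gExp (k : ℕ) (β δ : ℝ) : ℝ :=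
  (β - 2 * δ) * Real.logb 2 ((k : ℝ) - 1) - (1 - δ) * Real.logb 2 (k : ℝ) +
    2 * binEntropy δ + (1 - δ) * binEntropy ((β - 2 * δ) / (1 - δ))

/-- `G_k(β) = sup { g_k(β,δ) : 0 ≤ δ ≤ β/2 }`. -/
noncomputable def GExp (k : ℕ) (β : ℝ) : ℝ :=
  sSup (gExp k β '' Set.Icc 0 (β / 2))

lemma binEntropy_eq (t : ℝ) : binEntropy t = Real.binEntropy t / Real.log 2 := by
  unfold binEntropy Real.binEntropy Real.logb
  rw [Real.log_inv, Real.log_inv]; ring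

lemma binEntropy_cont : Continuous binEntropy := by
  simp only [funext binEntropy_eq]
  exact Real.binEntropy_continuous.div_const _

lemma hasDerivAt_binEntropy' {t : ℝ} (h0 : t ≠ 0) (h1 : t ≠ 1) :
    HasDerivAt binEntropy (Real.logb 2 (1 - t) - Real.logb 2 t) t := by
  have := (Real.hasDerivAt_binEntropy h0 h1).div_const (Real.log 2)
  simp only [← binEntropy_eq] at this
  refine this.congr_deriv ?_
  unfold Real.logb; ring

-- the algebraic identity
lemma xlogb_identity (x : ℝ) :
    x * (Real.logb 2 (1 - x) - Real.logb 2 x) - binEntropy x = Real.logb 2 (1 - x) := by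
  unfold binEntropy; ring

lemma gExp_key (k : ℕ) (hk : 2 ≤ k) {β1 β2 δ : ℝ} (h0 : 0 ≤ β1) (h12 : β1 < β2)
    (h2 : β2 ≤ 1) (hδ0 : 0 ≤ δ) (hδ : δ ≤ β1 / 2) :
    gExp k β1 δ < gExp k β2 (δ + (β2 - β1) / 2) := by
  obtain ⟨Δ, hΔ⟩ : ∃ Δ : ℝ, Δ = β2 - β1 := ⟨_, rfl⟩
  have hΔpos : 0 < Δ := by rw [hΔ]; linarith
  obtain ⟨c, hc⟩ : ∃ c : ℝ, c = β1 - 2 * δ := ⟨_, rfl⟩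
  have hc0 : 0 ≤ c := by rw [hc]; linarith
  set φ : ℝ → ℝ := fun t =>
    c * Real.logb 2 ((k : ℝ) - 1) - (1 - (δ + t / 2)) * Real.logb 2 (k : ℝ) +
      2 * binEntropy (δ + t / 2) + (1 - (δ + t / 2)) * binEntropy (c / (1 - (δ + t / 2)))
    with hφ
  have hden : ∀ t ∈ Set.Icc (0:ℝ) Δ, (0:ℝ) < 1 - (δ + t / 2) := by
    intro t ht
    simp only [Set.mem_Icc] at ht
    have : δ + t / 2 ≤ β2 / 2 := by simp only [hΔ] at ht ⊢; linarith
    linarith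
  have hcont : ContinuousOn φ (Set.Icc 0 Δ) := by
    have h1 : Continuous fun t : ℝ => 1 - (δ + t / 2) := by fun_prop
    apply ContinuousOn.add
    apply ContinuousOn.add
    · apply ContinuousOn.sub continuousOn_const
      exact (h1.continuousOn.mul continuousOn_const)
    · exact (continuous_const.mul (binEntropy_cont.comp
        (by fun_prop : Continuous fun t : ℝ => δ + t/2))).continuousOn
    · exact h1.continuousOn.mul
        (binEntropy_cont.comp_continuousOn
          (continuousOn_const.div h1.continuousOn fun t ht => (hden t ht).ne'))
  have hL : (1:ℝ) ≤ Real.logb 2 k := by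
    rw [show (1:ℝ) = Real.logb 2 2 from (Real.logb_self_eq_one (by norm_num)).symm]
    apply Real.logb_le_logb_of_le one_lt_two (by norm_num)
    exact_mod_cast hk
  have hderiv : ∀ t ∈ Set.Ioo (0:ℝ) Δ, 0 < deriv φ t := by
    intro t ht
    obtain ⟨ht0, htΔ⟩ := ht
    obtain ⟨d, hd⟩ : ∃ d : ℝ, d = δ + t / 2 := ⟨_, rfl⟩
    rw [hΔ] at htΔ
    have hd0 : 0 < d := by rw [hd]; linarith
    have hdhalf : d < 1 / 2 := by rw [hd]; linarith
    have hd1 : d < 1 := by linarith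
    have hu : (0:ℝ) < 1 - d := by linarith
    obtain ⟨x, hx⟩ : ∃ x : ℝ, x = c / (1 - d) := ⟨_, rfl⟩
    have hx1 : x < 1 := by
      rw [hx, div_lt_one hu]
      rw [hc, hd]; linarith
    have hxlb : d / (1 - d) ≤ 1 - x := by
      rw [hx, le_sub_iff_add_le, ← add_div, div_le_one hu]
      rw [hc, hd]; linarith
    -- derivative of inner map t ↦ δ + t/2
    have hinner : HasDerivAt (fun s : ℝ => δ + s / 2) (1/2) t := by
      simpa using ((hasDerivAt_id t).div_const 2).const_add δ
    have huder : HasDerivAt (fun s : ℝ => 1 - (δ + s / 2)) (-(1/2)) t := by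
      simpa using hinner.const_sub 1
    -- term 2
    have hT2 : HasDerivAt (fun s : ℝ => (1 - (δ + s / 2)) * Real.logb 2 (k:ℝ))
        (-(1/2) * Real.logb 2 (k:ℝ)) t := huder.mul_const _
    -- term 3
    have hT3 : HasDerivAt (fun s : ℝ => 2 * binEntropy (δ + s / 2))
        (2 * ((Real.logb 2 (1 - d) - Real.logb 2 d) * (1/2))) t := by
      have hbE : HasDerivAt binEntropy (Real.logb 2 (1 - d) - Real.logb 2 d) (δ + t / 2) := by
        rw [← hd]; exact hasDerivAt_binEntropy' hd0.ne' hd1.ne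
      exact (hbE.comp t hinner).const_mul 2
    -- term 4
    have hune : (1 - (δ + t / 2)) ≠ 0 := by rw [← hd]; exact hu.ne'
    have hT4 : HasDerivAt (fun s : ℝ => (1 - (δ + s / 2)) * binEntropy (c / (1 - (δ + s / 2))))
        (-(1/2) * binEntropy x + (1 - d) * ((Real.logb 2 (1 - x) - Real.logb 2 x) * (c * (1/2) / ((1 - d)^2)))) t := by
      rcases eq_or_lt_of_le hc0 with hceq | hcpos
      · -- c = 0 : function is constant 0
        have hfun : (fun s : ℝ => (1 - (δ + s / 2)) * binEntropy (c / (1 - (δ + s / 2))))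
            = fun _ : ℝ => (0:ℝ) := by
          funext s
          rw [← hceq]
          norm_num [binEntropy]
        have hxz : x = 0 := by rw [hx, ← hceq, zero_div]
        rw [hfun]
        have h0 : -(1/2) * binEntropy x + (1 - d) * ((Real.logb 2 (1 - x) - Real.logb 2 x) * (c * (1/2) / ((1 - d)^2)))
            = 0 := by
          rw [hxz, ← hceq]
          try norm_num [binEntropy]
        rw [h0]
        exact hasDerivAt_const t (0:ℝ)
      · have hx0 : 0 < x := by rw [hx]; exact div_pos hcpos hu
        have hquot : HasDerivAt (fun s : ℝ => c / (1 - (δ + s / 2)))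
            (c * (1/2) / ((1 - d)^2)) t := by
          have h := (hasDerivAt_const t c).div huder hune
          refine h.congr_deriv ?_
          rw [hd]
          field_simp
          try ring
        have hxeq : c / (1 - (δ + t / 2)) = x := by rw [hx, hd]
        have houter : HasDerivAt binEntropy (Real.logb 2 (1 - x) - Real.logb 2 x)
            (c / (1 - (δ + t / 2))) := by
          rw [hxeq]; exact hasDerivAt_binEntropy' hx0.ne' hx1.ne
        have hcomp := houter.comp t hquot
        have hmul := huder.mul hcomp
        refine hmul.congr_deriv ?_
        simp only [Function.comp_apply]
        rw [hxeq, hd]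
        try ring
    have hφder : HasDerivAt φ
        (-(-(1/2) * Real.logb 2 (k:ℝ)) + 2 * ((Real.logb 2 (1 - d) - Real.logb 2 d) * (1/2))
          + (-(1/2) * binEntropy x + (1 - d) * ((Real.logb 2 (1 - x) - Real.logb 2 x) * (c * (1/2) / ((1 - d)^2))))) t := by
      have := (((hasDerivAt_const t (c * Real.logb 2 ((k:ℝ) - 1))).sub hT2).add hT3).add hT4
      refine this.congr_deriv ?_
      ring
    rw [hφder.deriv]
    -- simplify: (1-d) * (c /(1-d)^2) = x
    have hsimp : (1 - d) * ((Real.logb 2 (1 - x) - Real.logb 2 x) * (c * (1/2) / ((1 - d)^2)))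
        = (1/2) * (x * (Real.logb 2 (1 - x) - Real.logb 2 x)) := by
      rw [hx]; field_simp
    rw [hsimp]
    have hkey : -(1/2) * binEntropy x + (1/2) * (x * (Real.logb 2 (1 - x) - Real.logb 2 x))
        = (1/2) * Real.logb 2 (1 - x) := by
      have := xlogb_identity x
      linarith
    rw [hkey]
    -- positivity
    have h1x : 0 < 1 - x := lt_of_lt_of_le (div_pos hd0 hu) hxlb
    have hlb1 : Real.logb 2 (d / (1 - d)) ≤ Real.logb 2 (1 - x) :=
      Real.logb_le_logb_of_le one_lt_two (div_pos hd0 hu) hxlb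
    rw [Real.logb_div hd0.ne' hu.ne'] at hlb1
    have hlb2 : Real.logb 2 d ≤ Real.logb 2 (1 - d) :=
      Real.logb_le_logb_of_le one_lt_two hd0 (by linarith)
    nlinarith [hL]
  have := strictMonoOn_of_deriv_pos (convex_Icc 0 Δ) hcont
    (fun t ht => hderiv t (by rwa [interior_Icc] at ht))
  have hlt := this (Set.left_mem_Icc.2 hΔpos.le) (Set.right_mem_Icc.2 hΔpos.le) hΔpos
  have e0 : φ 0 = gExp k β1 δ := by
    simp only [hφ, gExp, hc]
    norm_num
  have e1 : φ Δ = gExp k β2 (δ + (β2 - β1) / 2) := by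
    simp only [hφ, gExp, hc, hΔ]
    ring_nf
  rw [e0, e1] at hlt
  exact hlt

lemma gExp_contAt (k : ℕ) {p : ℝ × ℝ} (hp : p.2 ≠ 1) :
    ContinuousAt (fun p : ℝ × ℝ => gExp k p.1 p.2) p := by
  have hne : (1:ℝ) - p.2 ≠ 0 := sub_ne_zero.2 (Ne.symm hp)
  have h1 : ContinuousAt (fun p : ℝ × ℝ => (p.1 - 2 * p.2) / (1 - p.2)) p :=
    ContinuousAt.div (by fun_prop) (by fun_prop) hne
  unfold gExp
  exact ((((continuous_fst.continuousAt.sub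
      (continuous_snd.continuousAt.const_mul 2)).mul continuousAt_const).sub
      ((continuousAt_const.sub continuous_snd.continuousAt).mul continuousAt_const)).add
      (continuousAt_const.mul
        (binEntropy_cont.continuousAt.comp continuous_snd.continuousAt))).add
      ((continuousAt_const.sub continuous_snd.continuousAt).mul
        (binEntropy_cont.continuousAt.comp h1))

lemma gExp_contOn (k : ℕ) {β : ℝ} (hβ1 : β ≤ 1) :
    ContinuousOn (gExp k β) (Set.Icc 0 (β / 2)) := by
  intro δ hδ
  have hδ1 : δ ≠ 1 := by
    simp only [Set.mem_Icc] at hδ; intro h; rw [h] at hδ; linarith [hδ.2]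
  have : ContinuousAt (gExp k β) δ := by
    have := (gExp_contAt k (p := (β, δ)) hδ1).comp
      (f := fun δ : ℝ => (β, δ)) (by fun_prop : Continuous fun δ : ℝ => (β, δ)).continuousAt
    exact this
  exact this.continuousWithinAt

lemma GExp_isMax (k : ℕ) {β : ℝ} (hβ0 : 0 ≤ β) (hβ1 : β ≤ 1) :
    ∃ δ0 ∈ Set.Icc 0 (β / 2), GExp k β = gExp k β δ0 ∧
      ∀ δ ∈ Set.Icc (0:ℝ) (β / 2), gExp k β δ ≤ gExp k β δ0 := by
  have hne : (Set.Icc (0:ℝ) (β / 2)).Nonempty := ⟨0, by constructor <;> [rfl; linarith]⟩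
  obtain ⟨δ0, hδ0, hmax⟩ := isCompact_Icc.exists_isMaxOn hne (gExp_contOn k hβ1)
  refine ⟨δ0, hδ0, ?_, fun δ hδ => hmax hδ⟩
  have : IsGreatest (gExp k β '' Set.Icc 0 (β / 2)) (gExp k β δ0) :=
    ⟨Set.mem_image_of_mem _ hδ0, fun y ⟨δ, hδ, hy⟩ => hy ▸ hmax hδ⟩
  exact this.csSup_eq

lemma GExp_bddAbove (k : ℕ) {β : ℝ} (hβ1 : β ≤ 1) :
    BddAbove (gExp k β '' Set.Icc 0 (β / 2)) :=
  (isCompact_Icc.image_of_continuousOn (gExp_contOn k hβ1)).bddAbove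

lemma GExp_strictMonoOn (k : ℕ) (hk : 2 ≤ k) : StrictMonoOn (GExp k) (Set.Icc 0 1) := by
  intro β1 h1 β2 h2 h12
  simp only [Set.mem_Icc] at h1 h2
  obtain ⟨δ0, hδ0, hG1, _⟩ := GExp_isMax k h1.1 h1.2
  simp only [Set.mem_Icc] at hδ0
  have hkey := gExp_key k hk h1.1 h12 h2.2 hδ0.1 hδ0.2
  have hmem : δ0 + (β2 - β1) / 2 ∈ Set.Icc (0:ℝ) (β2 / 2) := by
    constructor <;> [linarith [hδ0.1]; linarith [hδ0.2]]
  calc GExp k β1 = gExp k β1 δ0 := hG1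
    _ < gExp k β2 (δ0 + (β2 - β1) / 2) := hkey
    _ ≤ GExp k β2 := le_csSup (GExp_bddAbove k h2.2) (Set.mem_image_of_mem _ hmem)

lemma GExp_zero_neg (k : ℕ) (hk : 2 ≤ k) : GExp k 0 < 0 := by
  have h : GExp k 0 = gExp k 0 0 := by
    unfold GExp
    norm_num
  rw [h]
  have hk1 : (1:ℝ) < (k:ℝ) := by
    have : (2:ℝ) ≤ (k:ℝ) := by exact_mod_cast hk
    linarith
  have : gExp k 0 0 = -Real.logb 2 (k:ℝ) := by
    unfold gExp binEntropy
    norm_num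
  rw [this]
  simpa using Real.logb_pos one_lt_two hk1

lemma gExp_one_eval (k : ℕ) (hk : 2 ≤ k) :
    gExp k 1 (1 / ((k:ℝ) + 1)) = 2 * binEntropy (1 / ((k:ℝ) + 1)) := by
  have hn : (2:ℝ) ≤ (k:ℝ) := by exact_mod_cast hk
  have hn0 : (k:ℝ) ≠ 0 := by linarith
  have hn1 : (k:ℝ) - 1 ≠ 0 := by linarith
  have hnp1 : (k:ℝ) + 1 ≠ 0 := by linarith
  have harg : (1 - 2 * (1 / ((k:ℝ) + 1))) / (1 - 1 / ((k:ℝ) + 1)) = 1 - 1 / (k:ℝ) := by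
    have hd : 1 - 1 / ((k:ℝ) + 1) = (k:ℝ) / ((k:ℝ) + 1) := by field_simp; ring
    have hnum : 1 - 2 * (1 / ((k:ℝ) + 1)) = ((k:ℝ) - 1) / ((k:ℝ) + 1) := by field_simp; ring
    rw [hd, hnum, div_div_div_cancel_right₀]
    · field_simp
    · exact hnp1
  have e0 : (1:ℝ) - (1 - 1 / (k:ℝ)) = 1 / (k:ℝ) := by ring
  have e1 : (1:ℝ) - 1 / (k:ℝ) = ((k:ℝ) - 1) / (k:ℝ) := by field_simp
  have e2 : Real.logb 2 (((k:ℝ) - 1) / (k:ℝ))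
      = Real.logb 2 ((k:ℝ) - 1) - Real.logb 2 (k:ℝ) := Real.logb_div hn1 hn0
  have e3 : Real.logb 2 (1 / (k:ℝ)) = -Real.logb 2 (k:ℝ) := by
    rw [one_div, Real.logb_inv]
  unfold gExp
  rw [harg]
  rw [show binEntropy (1 - 1 / (k:ℝ))
      = ((k:ℝ) - 1) / (k:ℝ) * Real.logb 2 (k:ℝ)
        - ((k:ℝ) - 1) / (k:ℝ) * Real.logb 2 ((k:ℝ) - 1)
        + 1 / (k:ℝ) * Real.logb 2 (k:ℝ) from by
    unfold binEntropy
    rw [e0, e1, e2, e3]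
    ring]
  field_simp
  ring

lemma GExp_one_pos (k : ℕ) (hk : 2 ≤ k) : 0 < GExp k 1 := by
  have hn : (2:ℝ) ≤ (k:ℝ) := by exact_mod_cast hk
  have hδmem : (1 / ((k:ℝ) + 1)) ∈ Set.Icc (0:ℝ) (1 / 2) := by
    constructor
    · positivity
    · rw [div_le_div_iff₀ (by linarith) (by norm_num)]; linarith
  have hpos : 0 < binEntropy (1 / ((k:ℝ) + 1)) := by
    rw [binEntropy_eq]
    apply div_pos _ (Real.log_pos one_lt_two)
    apply Real.binEntropy_pos
    · positivity
    · rw [div_lt_one (by linarith)]; linarith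
  have hle : gExp k 1 (1 / ((k:ℝ) + 1)) ≤ GExp k 1 := by
    apply le_csSup (GExp_bddAbove k le_rfl)
    apply Set.mem_image_of_mem
    simpa using hδmem
  rw [gExp_one_eval k hk] at hle
  linarith

lemma GExp_reparam (k : ℕ) {β : ℝ} (hβ0 : 0 ≤ β) :
    gExp k β '' Set.Icc 0 (β / 2) = (fun s => gExp k β (β * s / 2)) '' Set.Icc 0 1 := by
  ext y
  constructor
  · rintro ⟨δ, hδ, rfl⟩
    simp only [Set.mem_Icc] at hδ
    rcases eq_or_lt_of_le hβ0 with h0 | h0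
    · refine ⟨0, by norm_num, ?_⟩
      have hδz : δ = 0 := le_antisymm (by rw [← h0] at hδ; linarith [hδ.2]) hδ.1
      rw [hδz, ← h0]; norm_num
    · refine ⟨2 * δ / β, ⟨div_nonneg (by linarith [hδ.1]) h0.le, ?_⟩, ?_⟩
      · rw [div_le_one h0]; linarith [hδ.2]
      · simp only []
        congr 1
        field_simp
        try ring
  · rintro ⟨s, hs, rfl⟩
    simp only [Set.mem_Icc] at hs
    exact ⟨β * s / 2, ⟨div_nonneg (mul_nonneg hβ0 hs.1) (by norm_num),
      by nlinarith [hs.2]⟩, rfl⟩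

lemma GExp_contOn (k : ℕ) : ContinuousOn (GExp k) (Set.Icc 0 1) := by
  have hKc : IsCompact ((Set.Icc (0:ℝ) 1) ×ˢ (Set.Icc (0:ℝ) 1)) :=
    isCompact_Icc.prod isCompact_Icc
  have hFc : ContinuousOn (fun p : ℝ × ℝ => gExp k p.1 (p.1 * p.2 / 2))
      ((Set.Icc (0:ℝ) 1) ×ˢ (Set.Icc (0:ℝ) 1)) := by
    intro p hp
    simp only [Set.mem_prod, Set.mem_Icc] at hp
    have hne : p.1 * p.2 / 2 ≠ 1 := by
      intro h
      nlinarith [hp.1.1, hp.1.2, hp.2.1, hp.2.2]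
    have hinner : Continuous fun p : ℝ × ℝ => (p.1, p.1 * p.2 / 2) := by fun_prop
    have hcomp : ContinuousAt ((fun q : ℝ × ℝ => gExp k q.1 q.2) ∘
        (fun p : ℝ × ℝ => (p.1, p.1 * p.2 / 2))) p :=
      ContinuousAt.comp (gExp_contAt k (p := (p.1, p.1 * p.2 / 2)) hne) hinner.continuousAt
    exact hcomp.continuousWithinAt
  have hUC := hKc.uniformContinuousOn_of_continuous hFc
  rw [Metric.uniformContinuousOn_iff] at hUC
  rw [Metric.continuousOn_iff]
  intro β hβ ε hε
  obtain ⟨η, hη, hUC'⟩ := hUC (ε / 2) (by linarith)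
  refine ⟨η, hη, fun β' hβ' hd => ?_⟩
  have key : ∀ γ γ' : ℝ, γ ∈ Set.Icc (0:ℝ) 1 → γ' ∈ Set.Icc (0:ℝ) 1 → dist γ' γ < η →
      GExp k γ' ≤ GExp k γ + ε / 2 := by
    intro γ γ' hγ hγ' hdist
    have h1 : GExp k γ' = sSup ((fun s => gExp k γ' (γ' * s / 2)) '' Set.Icc 0 1) := by
      unfold GExp; rw [GExp_reparam k hγ'.1]
    rw [h1]
    apply csSup_le ((Set.nonempty_Icc.2 zero_le_one).image _)
    rintro y ⟨s, hs, rfl⟩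
    have hmem1 : ((γ':ℝ), s) ∈ (Set.Icc (0:ℝ) 1) ×ˢ (Set.Icc (0:ℝ) 1) :=
      Set.mem_prod.2 ⟨hγ', hs⟩
    have hmem2 : ((γ:ℝ), s) ∈ (Set.Icc (0:ℝ) 1) ×ˢ (Set.Icc (0:ℝ) 1) :=
      Set.mem_prod.2 ⟨hγ, hs⟩
    have hdist2 : dist ((γ':ℝ), s) ((γ:ℝ), s) < η := by
      rw [Prod.dist_eq]
      simp only [dist_self]
      rw [max_eq_left dist_nonneg]
      exact hdist
    have habs := hUC' _ hmem1 _ hmem2 hdist2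
    rw [Real.dist_eq] at habs
    have habs' := (abs_lt.1 habs).2
    simp only [Set.mem_Icc] at hs hγ
    have hF2 : gExp k γ (γ * s / 2) ≤ GExp k γ := by
      apply le_csSup (GExp_bddAbove k hγ.2)
      apply Set.mem_image_of_mem
      exact ⟨div_nonneg (mul_nonneg hγ.1 hs.1) (by norm_num), by nlinarith [hs.2]⟩
    simp only [] at habs' ⊢
    linarith
  have hA := key β β' hβ hβ' hd
  have hB := key β' β hβ' hβ (by rwa [dist_comm])
  rw [Real.dist_eq, abs_lt]
  constructor <;> linarith


/-- `G_k` is strictly increasing on `[0,1]`, is negative at `0` and positive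
at `1`, and has a unique zero `β*` in `(0,1)`; moreover
`{β ∈ [0,1] : G_k(β) < 0} = [0, β*)`, so `β* = sup {β ∈ [0,1] : G_k(β) < 0}`. -/
theorem GExp_strictMono_unique_zero (k : ℕ) (hk : 2 ≤ k) :
    StrictMonoOn (GExp k) (Set.Icc 0 1) ∧
    GExp k 0 < 0 ∧ 0 < GExp k 1 ∧
    ∃ βs ∈ Set.Ioo (0 : ℝ) 1, GExp k βs = 0 ∧
      (∀ β' ∈ Set.Ioo (0 : ℝ) 1, GExp k β' = 0 → β' = βs) ∧
      {β : ℝ | β ∈ Set.Icc (0 : ℝ) 1 ∧ GExp k β < 0} = Set.Ico 0 βs ∧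
      βs = sSup {β : ℝ | β ∈ Set.Icc (0 : ℝ) 1 ∧ GExp k β < 0} := by
  have hmono := GExp_strictMonoOn k hk
  have hG0 := GExp_zero_neg k hk
  have hG1 := GExp_one_pos k hk
  refine ⟨hmono, hG0, hG1, ?_⟩
  have hIVT := intermediate_value_Icc (by norm_num : (0:ℝ) ≤ 1) (GExp_contOn k)
  obtain ⟨βs, hβs, hGβs⟩ := hIVT ⟨hG0.le, hG1.le⟩
  have hβs0 : βs ≠ 0 := by rintro rfl; rw [hGβs] at hG0; exact lt_irrefl 0 hG0
  have hβs1 : βs ≠ 1 := by rintro rfl; rw [hGβs] at hG1; exact lt_irrefl 0 hG1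
  have hβsIoo : βs ∈ Set.Ioo (0:ℝ) 1 :=
    ⟨lt_of_le_of_ne hβs.1 (Ne.symm hβs0), lt_of_le_of_ne hβs.2 hβs1⟩
  refine ⟨βs, hβsIoo, hGβs, ?_, ?_, ?_⟩
  · intro β' hβ' hGβ'
    exact hmono.injOn (Set.Ioo_subset_Icc_self hβ') hβs (hGβ'.trans hGβs.symm)
  · ext β
    simp only [Set.mem_setOf_eq, Set.mem_Icc, Set.mem_Ico]
    constructor
    · rintro ⟨⟨hβ0, hβ1⟩, hGβ⟩
      refine ⟨hβ0, ?_⟩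
      by_contra h
      push_neg at h
      have := hmono.monotoneOn hβs ⟨hβ0, hβ1⟩ h
      rw [hGβs] at this
      linarith
    · rintro ⟨hβ0, hβlt⟩
      have hβ1 : β ≤ 1 := le_trans hβlt.le hβs.2
      refine ⟨⟨hβ0, hβ1⟩, ?_⟩
      have := hmono ⟨hβ0, hβ1⟩ hβs hβlt
      rw [hGβs] at this
      exact this
  · rw [show {β : ℝ | β ∈ Set.Icc (0 : ℝ) 1 ∧ GExp k β < 0} = Set.Ico 0 βs from ?_]
    · exact (csSup_Ico hβsIoo.1).symm
    · ext β
      simp only [Set.mem_setOf_eq, Set.mem_Icc, Set.mem_Ico]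
      constructor
      · rintro ⟨⟨hβ0, hβ1⟩, hGβ⟩
        refine ⟨hβ0, ?_⟩
        by_contra h
        push_neg at h
        have := hmono.monotoneOn hβs ⟨hβ0, hβ1⟩ h
        rw [hGβs] at this
        linarith
      · rintro ⟨hβ0, hβlt⟩
        have hβ1 : β ≤ 1 := le_trans hβlt.le hβs.2
        refine ⟨⟨hβ0, hβ1⟩, ?_⟩
        have := hmono ⟨hβ0, hβ1⟩ hβs hβlt
        rw [hGβs] at this
        exact this
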